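/- Let x* ∈ (0,1] and let u : [0, x*] → ℝ be absolutely continuous with u(0) = 0 and u(x*) = (1/2) x*^{1/3}. Then the functional G[u] = ∫₀^{x*} x² u'(x)⁶ dx satisfies G[u] ≥ (3/10)⁶ · (5/3) · x*^{−1}, with equality for u₀(x) = (1/2) x^{3/5} x*^{−4/15}. -/

import Mathlib

open MeasureTheory

lemma base_lintegral {xs : ℝ} (hxs : 0 < xs) :
    ∫⁻ x in Set.Ioc (0:ℝ) xs, ENNReal.ofReal (x ^ (-(2:ℝ)/5)) =
      ENNReal.ofReal ((5/3) * xs ^ ((3:ℝ)/5)) := by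
  have hint : IntegrableOn (fun x : ℝ => x ^ (-(2:ℝ)/5)) (Set.Ioc 0 xs) := by
    have h := intervalIntegral.intervalIntegrable_rpow' (a := (0:ℝ)) (b := xs)
      (r := -(2:ℝ)/5) (by norm_num)
    rwa [intervalIntegrable_iff, Set.uIoc_of_le hxs.le] at h
  have hnn : 0 ≤ᵐ[volume.restrict (Set.Ioc (0:ℝ) xs)]
      fun x : ℝ => x ^ (-(2:ℝ)/5) :=
    (ae_restrict_mem measurableSet_Ioc).mono fun x hx => Real.rpow_nonneg hx.1.le _
  rw [← ofReal_integral_eq_lintegral_ofReal hint hnn]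
  congr 1
  rw [← intervalIntegral.integral_of_le hxs.le,
    integral_rpow (Or.inl (by norm_num))]
  have h35 : -(2:ℝ)/5 + 1 = 3/5 := by norm_num
  rw [h35, Real.zero_rpow (by norm_num)]
  ring

/-- Explicit minimization of `G[u] = ∫₀^{x*} x² u'(x)⁶ dx` over absolutely continuous
`u` with `u(0) = 0`, `u(x*) = ½ x*^{1/3}`: one has `G[u] ≥ (3/10)⁶ (5/3) x*⁻¹`, with
equality for `u₀(x) = ½ x^{3/5} x*^{−4/15}` (whose derivative is
`u₀'(x) = (3/10) x^{−2/5} x*^{−4/15}`). -/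
theorem G_functional_lower_bound (xs : ℝ) (hxs : xs ∈ Set.Ioc (0 : ℝ) 1) :
    (∀ u u' : ℝ → ℝ,
      (∀ x ∈ Set.Icc (0 : ℝ) xs, u x = ∫ t in (0 : ℝ)..x, u' t) →
      IntervalIntegrable u' volume 0 xs →
      u xs = (1 / 2) * xs ^ ((1 : ℝ) / 3) →
      ENNReal.ofReal ((3 / 10 : ℝ) ^ 6 * (5 / 3) / xs) ≤
        ∫⁻ x in Set.Ioc (0 : ℝ) xs, ENNReal.ofReal (x ^ 2 * u' x ^ 6)) ∧
    ∫⁻ x in Set.Ioc (0 : ℝ) xs,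
        ENNReal.ofReal
          (x ^ 2 * ((3 / 10) * x ^ (-(2 : ℝ) / 5) * xs ^ (-(4 : ℝ) / 15)) ^ 6) =
      ENNReal.ofReal ((3 / 10 : ℝ) ^ 6 * (5 / 3) / xs) := by
  obtain ⟨hxs0, hxs1⟩ := hxs
  constructor
  · -- lower bound via Hölder
    intro u u' hu hu' huxs
    set A : ENNReal := ∫⁻ x in Set.Ioc (0:ℝ) xs, ENNReal.ofReal (x ^ 2 * u' x ^ 6) with hA
    by_cases hAtop : A = ⊤
    · rw [hAtop]; exact le_top
    have hInt : IntegrableOn u' (Set.Ioc 0 xs) := by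
      rwa [intervalIntegrable_iff, Set.uIoc_of_le hxs0.le] at hu'
    have hu'm : AEMeasurable u' (volume.restrict (Set.Ioc (0:ℝ) xs)) :=
      hInt.aestronglyMeasurable.aemeasurable
    set f : ℝ → ENNReal := fun x => ENNReal.ofReal (x ^ (-(1:ℝ)/3)) with hf
    set g : ℝ → ENNReal := fun x => ENNReal.ofReal (|u' x| * x ^ ((1:ℝ)/3)) with hg
    have hfm : AEMeasurable f (volume.restrict (Set.Ioc (0:ℝ) xs)) := by
      apply Measurable.aemeasurable
      fun_prop
    have hgm : AEMeasurable g (volume.restrict (Set.Ioc (0:ℝ) xs)) := by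
      apply ENNReal.measurable_ofReal.comp_aemeasurable
      exact (measurable_abs.comp_aemeasurable hu'm).mul (by fun_prop)
    have hconj : Real.HolderConjugate (6/5) 6 := Real.holderConjugate_iff.mpr ⟨by norm_num, by norm_num⟩
    have key := ENNReal.lintegral_mul_le_Lp_mul_Lq
      (volume.restrict (Set.Ioc (0:ℝ) xs)) hconj hfm hgm
    -- identify the three integrals
    have e1 : ∫⁻ x in Set.Ioc (0:ℝ) xs, (f * g) x =
        ∫⁻ x in Set.Ioc (0:ℝ) xs, ENNReal.ofReal |u' x| := by
      apply setLIntegral_congr_fun measurableSet_Ioc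
      intro x hx
      simp only [Pi.mul_apply, hf, hg]
      rw [← ENNReal.ofReal_mul (Real.rpow_nonneg hx.1.le _)]
      congr 1
      have : x ^ (-(1:ℝ)/3) * x ^ ((1:ℝ)/3) = 1 := by
        rw [← Real.rpow_add hx.1]; norm_num
      calc x ^ (-(1:ℝ)/3) * (|u' x| * x ^ ((1:ℝ)/3))
          = |u' x| * (x ^ (-(1:ℝ)/3) * x ^ ((1:ℝ)/3)) := by ring
        _ = |u' x| := by rw [this, mul_one]
    have e2 : ∫⁻ x in Set.Ioc (0:ℝ) xs, f x ^ ((6:ℝ)/5) =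
        ENNReal.ofReal ((5/3) * xs ^ ((3:ℝ)/5)) := by
      rw [← base_lintegral hxs0]
      apply setLIntegral_congr_fun measurableSet_Ioc
      intro x hx
      simp only [hf]
      rw [ENNReal.ofReal_rpow_of_nonneg (Real.rpow_nonneg hx.1.le _) (by norm_num),
        ← Real.rpow_mul hx.1.le]
      norm_num
    have e3 : ∫⁻ x in Set.Ioc (0:ℝ) xs, g x ^ ((6:ℝ)) = A := by
      rw [hA]
      apply setLIntegral_congr_fun measurableSet_Ioc
      intro x hx
      simp only [hg]
      rw [ENNReal.ofReal_rpow_of_nonneg (mul_nonneg (abs_nonneg _) (Real.rpow_nonneg hx.1.le _)) (by norm_num)]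
      congr 1
      have h6 : ((6:ℝ)) = ((6:ℕ) : ℝ) := by norm_num
      rw [h6, Real.rpow_natCast]
      have h1 : (x ^ ((1:ℝ)/3)) ^ (6:ℕ) = x ^ (2:ℕ) := by
        rw [← Real.rpow_natCast (x ^ ((1:ℝ)/3)) 6, ← Real.rpow_mul hx.1.le,
          ← Real.rpow_natCast x 2]
        norm_num
      have h2 : |u' x| ^ (6:ℕ) = u' x ^ 6 := by
        rw [← abs_pow]; exact abs_of_nonneg (by positivity)
      rw [mul_pow, h2, h1]; ring
    rw [e1, e2, e3] at key
    -- lower bound for ∫ |u'|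
    have lhs_bound : ENNReal.ofReal ((1/2) * xs ^ ((1:ℝ)/3)) ≤
        ∫⁻ x in Set.Ioc (0:ℝ) xs, ENNReal.ofReal |u' x| := by
      rw [← ofReal_integral_eq_lintegral_ofReal hInt.abs
        (Filter.Eventually.of_forall fun x => abs_nonneg _)]
      apply ENNReal.ofReal_le_ofReal
      have h0 : u xs = ∫ t in (0:ℝ)..xs, u' t := hu xs ⟨hxs0.le, le_refl _⟩
      have h1 : (1/2) * xs ^ ((1:ℝ)/3) = ∫ t in (0:ℝ)..xs, u' t := by
        rw [← h0, huxs]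
      rw [h1]
      calc ∫ t in (0:ℝ)..xs, u' t ≤ |∫ t in (0:ℝ)..xs, u' t| := le_abs_self _
        _ ≤ ∫ t in (0:ℝ)..xs, |u' t| :=
            intervalIntegral.abs_integral_le_integral_abs hxs0.le
        _ = ∫ t in Set.Ioc (0:ℝ) xs, |u' t| := intervalIntegral.integral_of_le hxs0.le
    have main : ENNReal.ofReal ((1/2) * xs ^ ((1:ℝ)/3)) ≤
        ENNReal.ofReal ((5/3) * xs ^ ((3:ℝ)/5)) ^ (1/((6:ℝ)/5)) * A ^ (1/(6:ℝ)) :=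
      lhs_bound.trans key
    set a : ℝ := A.toReal with ha
    have ha0 : 0 ≤ a := ENNReal.toReal_nonneg
    have hAa : A = ENNReal.ofReal a := (ENNReal.ofReal_toReal hAtop).symm
    set B : ℝ := (5/3) * xs ^ ((3:ℝ)/5) with hB
    have hB0 : 0 ≤ B := by positivity
    have main2 : (1/2) * xs ^ ((1:ℝ)/3) ≤ B ^ ((5:ℝ)/6) * a ^ ((1:ℝ)/6) := by
      have h56 : 1/((6:ℝ)/5) = (5:ℝ)/6 := by norm_num
      have h16 : 1/(6:ℝ) = (1:ℝ)/6 := by norm_num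
      rw [hAa, h56, h16, ENNReal.ofReal_rpow_of_nonneg hB0 (by norm_num),
        ENNReal.ofReal_rpow_of_nonneg ha0 (by norm_num),
        ← ENNReal.ofReal_mul (by positivity)] at main
      exact (ENNReal.ofReal_le_ofReal_iff (by positivity)).mp main
    -- raise to 6th power
    have main3 : ((1/2) * xs ^ ((1:ℝ)/3)) ^ (6:ℕ) ≤ B ^ (5:ℕ) * a := by
      have := pow_le_pow_left₀ (by positivity) main2 6
      calc ((1/2) * xs ^ ((1:ℝ)/3)) ^ (6:ℕ)
          ≤ (B ^ ((5:ℝ)/6) * a ^ ((1:ℝ)/6)) ^ (6:ℕ) := this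
        _ = B ^ (5:ℕ) * a := by
            rw [mul_pow, ← Real.rpow_natCast (B ^ ((5:ℝ)/6)) 6,
              ← Real.rpow_natCast (a ^ ((1:ℝ)/6)) 6,
              ← Real.rpow_mul hB0, ← Real.rpow_mul ha0]
            norm_num
    have hx2 : ((1/2) * xs ^ ((1:ℝ)/3)) ^ (6:ℕ) = (1/64) * xs ^ (2:ℕ) := by
      rw [mul_pow, ← Real.rpow_natCast (xs ^ ((1:ℝ)/3)) 6, ← Real.rpow_mul hxs0.le,
        ← Real.rpow_natCast xs 2]
      norm_num
    have hB5 : B ^ (5:ℕ) = (3125/243) * xs ^ (3:ℕ) := by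
      rw [hB, mul_pow, ← Real.rpow_natCast (xs ^ ((3:ℝ)/5)) 5, ← Real.rpow_mul hxs0.le,
        ← Real.rpow_natCast xs 3]
      norm_num
    rw [hx2, hB5] at main3
    rw [hAa]
    apply ENNReal.ofReal_le_ofReal
    -- final arithmetic: (3/10)^6 * (5/3) / xs ≤ a
    rw [div_le_iff₀ hxs0]
    have hx2p : (0:ℝ) < xs ^ 2 := by positivity
    rw [← mul_le_mul_iff_of_pos_right hx2p]
    nlinarith [main3]
  · -- value at the minimizer
    set K : ℝ := (3/10)^6 * xs ^ (-(8:ℝ)/5) with hK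
    have hK0 : 0 ≤ K := by positivity
    have hpt : ∀ x ∈ Set.Ioc (0:ℝ) xs,
        ENNReal.ofReal (x ^ 2 * ((3/10) * x ^ (-(2:ℝ)/5) * xs ^ (-(4:ℝ)/15)) ^ 6) =
        ENNReal.ofReal K * ENNReal.ofReal (x ^ (-(2:ℝ)/5)) := by
      intro x hx
      rw [← ENNReal.ofReal_mul hK0]
      congr 1
      have h1 : (x ^ (-(2:ℝ)/5)) ^ (6:ℕ) = x ^ (-(12:ℝ)/5) := by
        rw [← Real.rpow_natCast (x ^ (-(2:ℝ)/5)) 6, ← Real.rpow_mul hx.1.le]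
        norm_num
      have h2 : (xs ^ (-(4:ℝ)/15)) ^ (6:ℕ) = xs ^ (-(8:ℝ)/5) := by
        rw [← Real.rpow_natCast (xs ^ (-(4:ℝ)/15)) 6, ← Real.rpow_mul hxs0.le]
        norm_num
      have h3 : x ^ (2:ℕ) * x ^ (-(12:ℝ)/5) = x ^ (-(2:ℝ)/5) := by
        rw [← Real.rpow_natCast x 2, ← Real.rpow_add hx.1]
        norm_num
      calc x ^ 2 * ((3/10) * x ^ (-(2:ℝ)/5) * xs ^ (-(4:ℝ)/15)) ^ 6
          = (3/10)^6 * (xs ^ (-(4:ℝ)/15)) ^ (6:ℕ) *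
            (x ^ (2:ℕ) * (x ^ (-(2:ℝ)/5)) ^ (6:ℕ)) := by ring
        _ = K * x ^ (-(2:ℝ)/5) := by rw [h1, h2, h3, hK]
    rw [setLIntegral_congr_fun measurableSet_Ioc hpt,
      lintegral_const_mul' _ _ ENNReal.ofReal_ne_top, base_lintegral hxs0,
      ← ENNReal.ofReal_mul hK0]
    congr 1
    have : xs ^ (-(8:ℝ)/5) * xs ^ ((3:ℝ)/5) = xs⁻¹ := by
      rw [← Real.rpow_add hxs0, ← Real.rpow_neg_one xs]
      norm_num
    have h2 : xs ^ (-(8:ℝ)/5) * xs ^ ((3:ℝ)/5) * xs = 1 := by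
      rw [this]; field_simp
    rw [hK, eq_div_iff hxs0.ne']
    linear_combination ((3:ℝ)/10)^6 * (5/3) * h2
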